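/- arXiv:math/9809196 — 3 statements merged into one kernel-verified Lean document; each statement's English description precedes it below -/
import Mathlib

section
/- If T₁ ≈_α T₂ for well-founded trees T₁, T₂, then either Dp(T₁) = Dp(T₂), or both Dp(T₁) ≥ α and Dp(T₂) ≥ α. -/
/-- A well-founded tree: a strict partial order with a minimum (the root),
in which the predecessors of any element are linearly ordered, and whose
order has no infinite ascending chains (the reverse order is well-founded). -/
structure WFTree : Type 1 where
  A : Type
  lt : A → A → Prop
  trans : ∀ {a b c : A}, lt a b → lt b c → lt a c
  irrefl : ∀ a : A, ¬ lt a a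
  root : A
  root_min : ∀ x : A, x ≠ root → lt root x
  pred_linear : ∀ {x y z : A}, lt x z → lt y z → (lt x y ∨ x = y ∨ lt y x)
  wf : WellFounded fun a b => lt b a

namespace WFTree

/-- `y` is an immediate successor of `x`. -/
def Succ (T : WFTree) (x y : T.A) : Prop :=
  T.lt x y ∧ ∀ z, T.lt x z → ¬ T.lt z y

/-- The depth `Dp_T(x)` of a vertex: `sup { Dp_T(y) + 1 : y an immediate successor of x }`. -/
noncomputable def dp (T : WFTree) : T.A → Ordinal :=
  T.wf.fix fun x ih => ⨆ y : {y // T.Succ x y}, ih y.1 y.2.1 + 1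

/-- The depth of the tree, `Dp(T) = Dp_T(rt(T))`. -/
noncomputable def Dp (T : WFTree) : Ordinal := T.dp T.root

/-- The subtree `T[x]` of all elements `≥ x`, with root `x`. -/
def subtree (T : WFTree) (x : T.A) : WFTree where
  A := {y // y = x ∨ T.lt x y}
  lt a b := T.lt a.1 b.1
  trans h1 h2 := T.trans h1 h2
  irrefl a := T.irrefl a.1
  root := ⟨x, Or.inl rfl⟩
  root_min := by
    rintro ⟨y, hy⟩ hne
    rcases hy with rfl | h
    · exact absurd rfl hne
    · exact h
  pred_linear := by
    intro a b c h1 h2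
    rcases T.pred_linear h1 h2 with h | h | h
    · exact Or.inl h
    · exact Or.inr (Or.inl (Subtype.ext h))
    · exact Or.inr (Or.inr h)
  wf := InvImage.wf Subtype.val T.wf

end WFTree

/-- The back-and-forth equivalence `T₁ ≈_α T₂` between well-founded trees, defined by
recursion on `α`: `T₁ ≈_0 T₂` always, and for `α ≠ 0`, `T₁ ≈_α T₂` iff for every `β < α`
every immediate successor of the root of `T₁` has a `≈_β`-partner among the immediate
successors of the root of `T₂`, and symmetrically. -/
def TreeEquiv (α : Ordinal) (T₁ T₂ : WFTree) : Prop :=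
  ∀ β : Ordinal, β < α →
    (∀ x₁, T₁.Succ T₁.root x₁ →
      ∃ x₂, T₂.Succ T₂.root x₂ ∧ TreeEquiv β (T₁.subtree x₁) (T₂.subtree x₂)) ∧
    (∀ x₂, T₂.Succ T₂.root x₂ →
      ∃ x₁, T₁.Succ T₁.root x₁ ∧ TreeEquiv β (T₂.subtree x₂) (T₁.subtree x₁))
termination_by α
decreasing_by all_goals assumption

universe u v

lemma Ordinal.lift_iSup' {ι : Type} (f : ι → Ordinal.{0}) :
    Ordinal.lift.{u, 0} (⨆ i, f i) = ⨆ i, Ordinal.lift.{u, 0} (f i) := by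
  apply le_antisymm
  · apply le_of_forall_lt
    intro c hc
    obtain ⟨c', rfl⟩ := Ordinal.mem_range_lift_of_le hc.le
    rw [Ordinal.lift_lt] at hc
    obtain ⟨i, hi⟩ := Ordinal.lt_iSup_iff.mp hc
    exact lt_of_lt_of_le (Ordinal.lift_lt.mpr hi)
      (Ordinal.le_iSup (fun i => Ordinal.lift.{u, 0} (f i)) i)
  · apply Ordinal.iSup_le_iff.mpr
    intro i
    exact Ordinal.lift_le.mpr (Ordinal.le_iSup f i)

namespace WFTree

lemma dp_eq (T : WFTree) (x : T.A) :
    T.dp x = ⨆ y : {y // T.Succ x y}, T.dp y.1 + 1 :=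
  T.wf.fix_eq _ x

lemma dp_lift (T : WFTree) : ∀ x : T.A,
    WFTree.dp.{u} T x = Ordinal.lift.{u, 0} (WFTree.dp.{0} T x) := by
  intro x
  induction x using T.wf.induction with
  | _ x ih =>
    rw [dp_eq, dp_eq, Ordinal.lift_iSup']
    congr 1
    funext y
    rw [Ordinal.lift_add, Ordinal.lift_one, ih y.1 y.2.1]

lemma Dp_lift (T : WFTree) : WFTree.Dp.{u} T = Ordinal.lift.{u, 0} (WFTree.Dp.{0} T) :=
  T.dp_lift T.root

lemma Dp_transfer {T₁ T₂ : WFTree} (h : WFTree.Dp.{u} T₁ = WFTree.Dp.{u} T₂) :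
    WFTree.Dp.{v} T₁ = WFTree.Dp.{v} T₂ := by
  rw [WFTree.Dp_lift.{u} T₁, WFTree.Dp_lift.{u} T₂] at h
  rw [Ordinal.lift_inj] at h
  rw [WFTree.Dp_lift.{v} T₁, WFTree.Dp_lift.{v} T₂, h]

lemma subtree_succ_iff (T : WFTree) (x : T.A) (y z : (T.subtree x).A) :
    (T.subtree x).Succ y z ↔ T.Succ y.1 z.1 := by
  constructor
  · rintro ⟨h1, h2⟩
    refine ⟨h1, fun w hw hw2 => ?_⟩
    have hwmem : w = x ∨ T.lt x w := by
      rcases y.2 with hy | hy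
      · exact Or.inr (hy ▸ hw)
      · exact Or.inr (T.trans hy hw)
    exact h2 ⟨w, hwmem⟩ hw hw2
  · rintro ⟨h1, h2⟩
    exact ⟨h1, fun w hw hw2 => h2 w.1 hw hw2⟩

lemma dp_subtree (T : WFTree) (x : T.A) :
    ∀ (w : T.A) (hw : w = x ∨ T.lt x w),
      (T.subtree x).dp ⟨w, hw⟩ = (T.dp w : Ordinal.{u}) := by
  intro w
  induction w using T.wf.induction with
  | _ w ih =>
    intro hw
    rw [show (T.subtree x).dp ⟨w, hw⟩ = _ from dp_eq (T.subtree x) ⟨w, hw⟩, dp_eq]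
    apply le_antisymm
    · apply Ordinal.iSup_le_iff.mpr
      rintro ⟨z, hz⟩
      have hz' : T.Succ w z.1 := (T.subtree_succ_iff x _ z).mp hz
      have hdz : (T.subtree x).dp z = (T.dp z.1 : Ordinal.{u}) := by
        obtain ⟨zv, zmem⟩ := z; exact ih zv hz'.1 zmem
      rw [hdz]
      simpa using Ordinal.le_iSup (fun y : {y // T.Succ w y} => (T.dp y.1 : Ordinal.{u}) + 1)
        ⟨z.1, hz'⟩
    · apply Ordinal.iSup_le_iff.mpr
      rintro ⟨z, hz⟩
      have hzmem : z = x ∨ T.lt x z := by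
        rcases hw with rfl | hw'
        · exact Or.inr hz.1
        · exact Or.inr (T.trans hw' hz.1)
      have hz' : (T.subtree x).Succ ⟨w, hw⟩ ⟨z, hzmem⟩ :=
        (T.subtree_succ_iff x _ _).mpr hz
      have hdz : (T.subtree x).dp ⟨z, hzmem⟩ = (T.dp z : Ordinal.{u}) := ih z hz.1 hzmem
      rw [← hdz]
      simpa using Ordinal.le_iSup
        (fun y : {y // (T.subtree x).Succ ⟨w, hw⟩ y} => ((T.subtree x).dp y.1 : Ordinal.{u}) + 1)
        ⟨⟨z, hzmem⟩, hz'⟩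

lemma Dp_subtree (T : WFTree) (x : T.A) : (T.subtree x).Dp = (T.dp x : Ordinal.{u}) :=
  T.dp_subtree x x (Or.inl rfl)

lemma dp_succ_lt_Dp (T : WFTree) (x : T.A) (hx : T.Succ T.root x) :
    T.dp x + 1 ≤ (T.Dp : Ordinal.{u}) := by
  conv_rhs => rw [Dp, dp_eq]
  simpa using Ordinal.le_iSup (fun y : {y // T.Succ T.root y} => (T.dp y.1 : Ordinal.{u}) + 1)
    ⟨x, hx⟩

end WFTree

lemma treeEquiv_symm {α : Ordinal} {T₁ T₂ : WFTree} (h : TreeEquiv α T₁ T₂) :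
    TreeEquiv α T₂ T₁ := by
  rw [TreeEquiv] at h ⊢
  intro β hβ
  exact ⟨(h β hβ).2, (h β hβ).1⟩

lemma treeEquiv_depth_aux : ∀ α : Ordinal.{u}, ∀ T₁ T₂ : WFTree, TreeEquiv α T₁ T₂ →
    WFTree.Dp.{v} T₁ = WFTree.Dp.{v} T₂ ∨
      (α ≤ WFTree.Dp.{u} T₁ ∧ α ≤ WFTree.Dp.{u} T₂) := by
  intro α
  induction α using Ordinal.induction with
  | _ α ih =>
    have key : ∀ T₁ T₂ : WFTree, TreeEquiv α T₁ T₂ → WFTree.Dp.{u} T₁ < α →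
        WFTree.Dp.{u} T₂ ≤ WFTree.Dp.{u} T₁ := by
      intro T₁ T₂ h hlt
      rw [TreeEquiv] at h
      conv_lhs => rw [WFTree.Dp, WFTree.dp_eq]
      apply Ordinal.iSup_le_iff.mpr
      rintro ⟨x₂, hx₂⟩
      obtain ⟨x₁, hx₁, heq⟩ := (h _ hlt).2 x₂ hx₂
      have h1 : T₁.dp x₁ + 1 ≤ (T₁.Dp : Ordinal.{u}) := T₁.dp_succ_lt_Dp x₁ hx₁
      have h1' : (T₁.subtree x₁).Dp < (T₁.Dp : Ordinal.{u}) := by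
        rw [WFTree.Dp_subtree]
        exact lt_of_lt_of_le (Order.lt_succ _) h1
      rcases ih _ hlt _ _ heq with he | ⟨_, hge⟩
      · have he' : WFTree.Dp.{u} (T₂.subtree x₂) = WFTree.Dp.{u} (T₁.subtree x₁) :=
          WFTree.Dp_transfer he
        show T₂.dp x₂ + 1 ≤ (T₁.Dp : Ordinal.{u})
        rw [← WFTree.Dp_subtree T₂ x₂, he', WFTree.Dp_subtree]
        exact h1
      · exact absurd (lt_of_le_of_lt hge h1') (lt_irrefl _)
    have key2 : ∀ T₁ T₂ : WFTree, TreeEquiv α T₁ T₂ → WFTree.Dp.{u} T₁ < α →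
        WFTree.Dp.{u} T₁ ≤ WFTree.Dp.{u} T₂ := by
      intro T₁ T₂ h hlt
      rw [TreeEquiv] at h
      conv_lhs => rw [WFTree.Dp, WFTree.dp_eq]
      apply Ordinal.iSup_le_iff.mpr
      rintro ⟨x₁, hx₁⟩
      obtain ⟨x₂, hx₂, heq⟩ := (h _ hlt).1 x₁ hx₁
      have h1 : T₁.dp x₁ + 1 ≤ (T₁.Dp : Ordinal.{u}) := T₁.dp_succ_lt_Dp x₁ hx₁
      have h1' : (T₁.subtree x₁).Dp < (T₁.Dp : Ordinal.{u}) := by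
        rw [WFTree.Dp_subtree]
        exact lt_of_lt_of_le (Order.lt_succ _) h1
      rcases ih _ hlt _ _ heq with he | ⟨hge, _⟩
      · have he' : WFTree.Dp.{u} (T₁.subtree x₁) = WFTree.Dp.{u} (T₂.subtree x₂) :=
          WFTree.Dp_transfer he
        show T₁.dp x₁ + 1 ≤ (T₂.Dp : Ordinal.{u})
        rw [← WFTree.Dp_subtree T₁ x₁, he', WFTree.Dp_subtree]
        exact T₂.dp_succ_lt_Dp x₂ hx₂
      · exact absurd (lt_of_le_of_lt hge h1') (lt_irrefl _)
    intro T₁ T₂ h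
    by_cases h1 : WFTree.Dp.{u} T₁ < α
    · exact Or.inl (WFTree.Dp_transfer (le_antisymm (key2 T₁ T₂ h h1) (key T₁ T₂ h h1)))
    · by_cases h2 : WFTree.Dp.{u} T₂ < α
      · exact Or.inl (WFTree.Dp_transfer (le_antisymm
          (key T₂ T₁ (treeEquiv_symm h) h2) (key2 T₂ T₁ (treeEquiv_symm h) h2)))
      · exact Or.inr ⟨not_lt.mp h1, not_lt.mp h2⟩

/-- if `T₁ ≈_α T₂` then either `Dp(T₁) = Dp(T₂)`, or both depths
are at least `α`. -/
theorem treeEquiv_depth (α : Ordinal) (T₁ T₂ : WFTree) (h : TreeEquiv α T₁ T₂) :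
    T₁.Dp = T₂.Dp ∨ (α ≤ T₁.Dp ∧ α ≤ T₂.Dp) := by
  exact treeEquiv_depth_aux α T₁ T₂ h
end

section
/- There exists a family (T_A)_{A ⊆ ω} of well-founded trees, indexed by subsets of ω, such that distinct subsets A ≠ B give trees with T_A not ≈_{ω+1} T_B; in particular there are at least 2^{ℵ₀} pairwise ≈_{ω+1}-inequivalent countable well-founded trees. -/
-- AUX START

lemma TreeEquiv.symm {β : Ordinal} {T₁ T₂ : WFTree} (h : TreeEquiv β T₁ T₂) :
    TreeEquiv β T₂ T₁ := by
  rw [TreeEquiv] at h ⊢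
  intro γ hγ
  exact ⟨(h γ hγ).2, (h γ hγ).1⟩

namespace WFTree

lemma succ_subtree {T : WFTree} {x : T.A} (y z : (T.subtree x).A) :
    (T.subtree x).Succ y z ↔ T.Succ y.1 z.1 := by
  constructor
  · rintro ⟨h1, h2⟩
    refine ⟨h1, fun w hw1 hw2 => ?_⟩
    have hx : w = x ∨ T.lt x w := by
      rcases y.2 with h | h
      · exact Or.inr (h ▸ hw1)
      · exact Or.inr (T.trans h hw1)
    exact h2 ⟨w, hx⟩ hw1 hw2
  · rintro ⟨h1, h2⟩
    exact ⟨h1, fun w hw1 hw2 => h2 w.1 hw1 hw2⟩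

def ChainAt (T : WFTree) : ℕ → T.A → Prop
  | 0, x => ∀ y, ¬ T.Succ x y
  | (j+1), x => (∃ y, T.Succ x y) ∧ ∀ y, T.Succ x y → ChainAt T j y

lemma chainAt_subtree {T : WFTree} {x : T.A} :
    ∀ (j : ℕ) (y : (T.subtree x).A), ChainAt T j y.1 → ChainAt (T.subtree x) j y := by
  intro j
  induction j with
  | zero =>
    intro y h z hz
    exact h z.1 ((succ_subtree y z).1 hz)
  | succ j ih =>
    rintro y ⟨⟨z, hz⟩, h2⟩
    constructor
    · have hmem : z = x ∨ T.lt x z := by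
        rcases y.2 with h | h
        · exact Or.inr (h ▸ hz.1)
        · exact Or.inr (T.trans h hz.1)
      exact ⟨⟨z, hmem⟩, (succ_subtree y ⟨z, hmem⟩).2 hz⟩
    · intro w hw
      exact ih w (h2 w.1 ((succ_subtree y w).1 hw))

end WFTree

open WFTree in
lemma not_treeEquiv_of_chainAt :
    ∀ (j : ℕ) (j' : ℕ) (β : Ordinal) (T T' : WFTree),
      ChainAt T j T.root → ChainAt T' j' T'.root → j < j' → (j : Ordinal) < β →
      ¬ TreeEquiv β T T' := by
  intro j
  induction j with
  | zero =>
    intro j' β T T' h h' hjj hβ heq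
    rw [TreeEquiv] at heq
    obtain ⟨j'', rfl⟩ : ∃ k, j' = k + 1 := ⟨j' - 1, by omega⟩
    obtain ⟨y, hy⟩ := h'.1
    obtain ⟨x₁, hx₁, -⟩ := (heq 0 (by simpa using hβ)).2 y hy
    exact h x₁ hx₁
  | succ i ih =>
    intro j' β T T' h h' hjj hβ heq
    rw [TreeEquiv] at heq
    obtain ⟨j'', rfl⟩ : ∃ k, j' = k + 1 := ⟨j' - 1, by omega⟩
    obtain ⟨x, hx⟩ := h.1
    have hlt : ((i : Ordinal) + 1) < β := by
      have : ((i + 1 : ℕ) : Ordinal) < β := hβ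
      simpa using this
    obtain ⟨x₂, hx₂, he⟩ := (heq ((i : Ordinal) + 1) hlt).1 x hx
    have c1 : ChainAt (T.subtree x) i (T.subtree x).root :=
      chainAt_subtree i _ (h.2 x hx)
    have c2 : ChainAt (T'.subtree x₂) j'' (T'.subtree x₂).root :=
      chainAt_subtree j'' _ (h'.2 x₂ hx₂)
    exact ih j'' ((i : Ordinal) + 1) _ _ c1 c2 (by omega)
      (by exact lt_add_one _) he

-- concrete trees
def Node (A : Set ℕ) : Type := {p : ℕ × ℕ // p.1 ∈ A ∧ p.2 ≤ p.1}

def tlt (A : Set ℕ) : Option (Node A) → Option (Node A) → Prop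
  | none, none => False
  | none, some _ => True
  | some _, none => False
  | some p, some q => p.1.1 = q.1.1 ∧ p.1.2 < q.1.2

def TA (A : Set ℕ) : WFTree where
  A := Option (Node A)
  lt := tlt A
  trans := by
    rintro (_|a) (_|b) (_|c) h1 h2 <;> simp [tlt] at * <;> omega
  irrefl := by
    rintro (_|a) <;> simp [tlt]
  root := none
  root_min := by
    rintro (_|a) h
    · exact absurd rfl h
    · trivial
  pred_linear := by
    rintro (_|a) (_|b) (_|c) h1 h2 <;> simp [tlt] at *
    · rcases Nat.lt_trichotomy a.1.2 b.1.2 with h | h | h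
      · exact Or.inl ⟨by omega, h⟩
      · refine Or.inr (Or.inl (Subtype.ext ?_))
        have := h1.1; have := h2.1
        exact Prod.ext (by omega) h
      · exact Or.inr (Or.inr ⟨by omega, h⟩)
  wf := by
    constructor
    have key : ∀ (m : ℕ) (p : Node A), p.1.1 - p.1.2 ≤ m →
        Acc (fun a b => tlt A b a) (some p) := by
      intro m
      induction m with
      | zero =>
        intro p hp
        constructor
        rintro (_|q) hq
        · exact absurd hq (by simp [tlt])
        · exfalso
          obtain ⟨h1, h2⟩ := hq
          have := q.2.2
          omega
      | succ m ih =>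
        intro p hp
        constructor
        rintro (_|q) hq
        · exact absurd hq (by simp [tlt])
        · exact ih q (by obtain ⟨h1, h2⟩ := hq; omega)
    rintro (_|p)
    · constructor
      rintro (_|q) hq
      · exact absurd hq (by simp [tlt])
      · exact key q.1.1 q (Nat.sub_le _ _)
    · exact key p.1.1 p (Nat.sub_le _ _)

open WFTree

lemma TA_root_succ {A : Set ℕ} {x : Option (Node A)} :
    (TA A).Succ (TA A).root x ↔ ∃ p : Node A, p.1.2 = 0 ∧ x = some p := by
  constructor
  · rintro ⟨h1, h2⟩
    match x with
    | none => exact absurd h1 (by simp [TA, tlt])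
    | some p =>
      refine ⟨p, ?_, rfl⟩
      by_contra hk
      exact h2 (some ⟨(p.1.1, 0), p.2.1, Nat.zero_le _⟩) trivial ⟨rfl, show 0 < p.1.2 by omega⟩
  · rintro ⟨p, hp, rfl⟩
    refine ⟨trivial, ?_⟩
    rintro (_|q) hq1 hq2
    · exact hq1
    · obtain ⟨h1, h2⟩ := hq2; omega

lemma TA_succ {A : Set ℕ} (p : Node A) {x : Option (Node A)} :
    (TA A).Succ (some p) x ↔ ∃ q : Node A, q.1.1 = p.1.1 ∧ q.1.2 = p.1.2 + 1 ∧ x = some q := by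
  constructor
  · rintro ⟨h1, h2⟩
    match x with
    | none => exact absurd h1 (by simp [TA, tlt])
    | some q =>
      obtain ⟨he, hlt⟩ := h1
      refine ⟨q, he.symm, ?_, rfl⟩
      by_contra hk
      have hmem : p.1.1 ∈ A ∧ p.1.2 + 1 ≤ p.1.1 := by
        have := q.2.2; exact ⟨p.2.1, by omega⟩
      exact h2 (some ⟨(p.1.1, p.1.2 + 1), hmem⟩) ⟨rfl, show p.1.2 < p.1.2 + 1 by omega⟩
        ⟨show p.1.1 = q.1.1 from he, show p.1.2 + 1 < q.1.2 by omega⟩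
  · rintro ⟨q, h1, h2, rfl⟩
    refine ⟨⟨h1.symm, by omega⟩, ?_⟩
    rintro (_|r) hr1 hr2
    · exact hr1
    · obtain ⟨a1, a2⟩ := hr1; obtain ⟨b1, b2⟩ := hr2
      have : r.1.2 < q.1.2 := b2
      have : p.1.2 < r.1.2 := a2
      omega

lemma TA_chainAt {A : Set ℕ} :
    ∀ (j : ℕ) (p : Node A), p.1.1 - p.1.2 = j → ChainAt (TA A) j (some p) := by
  intro j
  induction j with
  | zero =>
    intro p hp y hy
    replace hy := (TA_succ p).1 hy
    obtain ⟨q, h1, h2, rfl⟩ := hy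
    have := q.2.2
    omega
  | succ j ih =>
    intro p hp
    constructor
    · have hmem : p.1.1 ∈ A ∧ p.1.2 + 1 ≤ p.1.1 := ⟨p.2.1, by omega⟩
      refine ⟨some ⟨(p.1.1, p.1.2 + 1), hmem⟩, (TA_succ p).2 ⟨⟨(p.1.1, p.1.2 + 1), hmem⟩, rfl, rfl, rfl⟩⟩
    · intro y hy
      replace hy := (TA_succ p).1 hy
      obtain ⟨q, h1, h2, rfl⟩ := hy
      exact ih q (by omega)


/-- there is a family `(T_A)_{A ⊆ ω}` of countable well-founded
trees such that distinct subsets of `ω` give `≈_{ω+1}`-inequivalent trees; in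
particular there are at least `2^ℵ₀` pairwise `≈_{ω+1}`-inequivalent countable
well-founded trees. -/
theorem exists_continuum_many_inequivalent_trees :
    ∃ T : Set ℕ → WFTree,
      (∀ A : Set ℕ, Cardinal.mk (T A).A ≤ Cardinal.aleph0) ∧
      ∀ A B : Set ℕ, A ≠ B → ¬ TreeEquiv (Ordinal.omega0 + 1) (T A) (T B) := by
  refine ⟨TA, fun A => ?_, fun A B hAB heq => ?_⟩
  · show Cardinal.mk (Option (Node A)) ≤ _
    have : Countable (Node A) := by unfold Node; infer_instance
    exact Cardinal.mk_le_aleph0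
  · -- key step: a witness n in exactly one of A, B
    have main : ∀ (A B : Set ℕ) (n : ℕ), n ∈ A → n ∉ B →
        ¬ TreeEquiv (Ordinal.omega0 + 1) (TA A) (TA B) := by
      intro A B n hnA hnB heq
      rw [TreeEquiv] at heq
      have hω : Ordinal.omega0 < Ordinal.omega0 + 1 := lt_add_one _
      set p : Node A := ⟨(n, 0), hnA, Nat.zero_le _⟩ with hp
      have hsucc : (TA A).Succ (TA A).root (some p) := (TA_root_succ).2 ⟨p, rfl, rfl⟩
      obtain ⟨x₂, hx₂, he⟩ := (heq Ordinal.omega0 hω).1 (some p) hsucc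
      replace hx₂ := (TA_root_succ).1 hx₂
      obtain ⟨q, hq0, rfl⟩ := hx₂
      have hne : q.1.1 ≠ n := fun h => hnB (h ▸ q.2.1)
      have c1 : ChainAt ((TA A).subtree (some p)) n ((TA A).subtree (some p)).root :=
        chainAt_subtree n _ (TA_chainAt n p (by simp [hp]))
      have c2 : ChainAt ((TA B).subtree (some q)) q.1.1 ((TA B).subtree (some q)).root :=
        chainAt_subtree q.1.1 _ (TA_chainAt q.1.1 q (by omega))
      rcases Nat.lt_or_ge n q.1.1 with h | h
      · exact not_treeEquiv_of_chainAt n q.1.1 Ordinal.omega0 _ _ c1 c2 h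
          (Ordinal.nat_lt_omega0 n) he
      · exact not_treeEquiv_of_chainAt q.1.1 n Ordinal.omega0 _ _ c2 c1 (by omega)
          (Ordinal.nat_lt_omega0 _) he.symm
    have hex : ∃ n, (n ∈ A ∧ n ∉ B) ∨ (n ∈ B ∧ n ∉ A) := by
      by_contra hc
      push_neg at hc
      exact hAB (Set.ext fun n => ⟨(hc n).1, (hc n).2⟩)
    obtain ⟨n, ⟨h1, h2⟩ | ⟨h1, h2⟩⟩ := hex
    · exact main A B n h1 h2 heq
    · exact main B A n h1 h2 heq.symm
end

section
/- Let J be an ℵ₁-complete ideal on κ and f : κ → Ord with Galvin–Hajnal rank ∥f∥_J = γ*. Then for every strictly decreasing sequence η of ordinals below γ* one can choose functions f_η : κ → Ord such that: f_⟨⟩ = f; whenever η⌢⟨i⟩ is a strictly decreasing sequence of ordinals < γ*, f_{η⌢⟨i⟩} <_J f_η, f_{η⌢⟨i⟩}(ζ) < f_η(ζ) or f_{η⌢⟨i⟩}(ζ) = f_η(ζ) = 0 for every ζ < κ, and ∥f_{η⌢⟨i⟩}∥_J ≥ i. -/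
set_option linter.deprecated false

/-- An `ℵ₁`-complete (σ-complete) proper ideal on (the underlying set of) `ι`:
a collection of subsets closed under subsets and countable unions, not
containing the whole set. -/
structure SigmaIdeal (ι : Type) where
  sets : Set (Set ι)
  subset_mem : ∀ ⦃s t : Set ι⦄, s ⊆ t → t ∈ sets → s ∈ sets
  iUnion_mem : ∀ f : ℕ → Set ι, (∀ n, f n ∈ sets) → (⋃ n, f n) ∈ sets
  empty_mem : ∅ ∈ sets
  univ_not_mem : Set.univ ∉ sets

namespace SigmaIdeal

variable {ι : Type}

theorem union_mem (J : SigmaIdeal ι) {s t : Set ι} (hs : s ∈ J.sets)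
    (ht : t ∈ J.sets) : s ∪ t ∈ J.sets := by
  have := J.iUnion_mem (fun n => if n = 0 then s else t)
    (by intro n; split <;> assumption)
  refine J.subset_mem ?_ this
  intro i hi
  rcases hi with hi | hi
  · exact Set.mem_iUnion.2 ⟨0, by simpa using hi⟩
  · exact Set.mem_iUnion.2 ⟨1, by simpa using hi⟩

/-- `g <_J f` iff `{i : g i ≥ f i} ∈ J`. -/
def ltJ (J : SigmaIdeal ι) (g f : ι → Ordinal) : Prop :=
  {i | f i ≤ g i} ∈ J.sets

instance (J : SigmaIdeal ι) : IsStrictOrder (ι → Ordinal) J.ltJ where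
  irrefl := fun f hf => by
    have hf' : {i | f i ≤ f i} ∈ J.sets := hf
    have he : {i | f i ≤ f i} = Set.univ := by ext i; simp
    exact J.univ_not_mem (he ▸ hf')
  trans := by
    intro a b c hab hbc
    refine J.subset_mem ?_ (J.union_mem hab hbc)
    intro i (hi : c i ≤ a i)
    rcases le_or_gt (b i) (a i) with h | h
    · exact Or.inl h
    · rcases le_or_gt (c i) (b i) with h' | h'
      · exact Or.inr h'
      · exact absurd (hi.trans_lt (h.trans h')) (lt_irrefl _)

/-- σ-completeness of `J` makes `<_J` well-founded (no infinite
`<_J`-descending sequences). -/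
theorem ltJ_wf (J : SigmaIdeal ι) : WellFounded J.ltJ := by
  rw [RelEmbedding.wellFounded_iff_isEmpty]
  constructor
  intro e
  have hmem : ∀ n : ℕ, {i | e n i ≤ e (n + 1) i} ∈ J.sets := fun n =>
    (e.map_rel_iff.2 (Nat.lt_succ_self n) : J.ltJ (e (n + 1)) (e n))
  have hU : (⋃ n, {i | e n i ≤ e (n + 1) i}) ∈ J.sets := J.iUnion_mem _ hmem
  have hne : (⋃ n, {i | e n i ≤ e (n + 1) i}) ≠ Set.univ := fun h =>
    J.univ_not_mem (h ▸ hU)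
  obtain ⟨i, hi⟩ := (Set.ne_univ_iff_exists_notMem _).1 hne
  have hdesc : ∀ n : ℕ, e (n + 1) i < e n i := by
    intro n
    by_contra h
    exact hi (Set.mem_iUnion.2 ⟨n, le_of_not_gt h⟩)
  exact (RelEmbedding.wellFounded_iff_isEmpty.1 Ordinal.lt_wf).false
    (RelEmbedding.natGT (fun n => e n i) hdesc)

/-- The Galvin–Hajnal rank `∥f∥_J` of `f : ι → Ord` modulo `J`, defined by
well-founded recursion on `<_J`: `∥f∥_J = sup {∥g∥_J + 1 : g <_J f}`. -/
noncomputable def rank (J : SigmaIdeal ι) (f : ι → Ordinal) : Ordinal :=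
  ((J.ltJ_wf).apply f).rank

end SigmaIdeal

namespace SigmaIdeal

universe u

variable {ι : Type} (J : SigmaIdeal ι)

theorem ltJ_congr {g g' b : ι → Ordinal} (h : {ζ | g ζ ≠ g' ζ} ∈ J.sets)
    (hb : J.ltJ b g) : J.ltJ b g' := by
  refine J.subset_mem ?_ (J.union_mem hb h)
  intro ζ (hζ : g' ζ ≤ b ζ)
  by_cases he : g ζ = g' ζ
  · exact Or.inl (he.le.trans hζ)
  · exact Or.inr he

theorem rank_le_of_forall {g g' : ι → Ordinal}
    (h : ∀ b, J.ltJ b g → J.ltJ b g') : J.rank g ≤ J.rank g' := by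
  show (J.ltJ_wf.apply g).rank ≤ (J.ltJ_wf.apply g').rank
  rw [Acc.rank_eq]
  exact Ordinal.iSup_le fun b =>
    Order.succ_le_of_lt ((J.ltJ_wf.apply g').rank_lt_of_rel (h b b.2))

theorem rank_congr {g g' : ι → Ordinal} (h : {ζ | g ζ ≠ g' ζ} ∈ J.sets) :
    J.rank g = J.rank g' := by
  have h' : {ζ | g' ζ ≠ g ζ} ∈ J.sets := by
    refine J.subset_mem ?_ h; intro ζ hζ; exact fun he => hζ he.symm
  exact le_antisymm (J.rank_le_of_forall fun b hb => J.ltJ_congr h hb)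
    (J.rank_le_of_forall fun b hb => J.ltJ_congr h' hb)

theorem exists_step {h : ι → Ordinal} {i : Ordinal} (hi : i < J.rank h) :
    ∃ g : ι → Ordinal, J.ltJ g h ∧
      (∀ ζ, g ζ < h ζ ∨ (g ζ = 0 ∧ h ζ = 0)) ∧ i ≤ J.rank g := by
  have hi' : i < (J.ltJ_wf.apply h).rank := hi
  rw [Acc.rank_eq, Ordinal.lt_iSup_iff] at hi'
  obtain ⟨⟨g, hg⟩, hlt⟩ := hi'
  rw [Order.lt_succ_iff] at hlt
  have hdiff : {ζ | g ζ ≠ (fun ζ => if g ζ < h ζ then g ζ else 0) ζ} ∈ J.sets := by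
    refine J.subset_mem ?_ hg
    intro ζ hζ
    simp only [Set.mem_setOf_eq] at hζ ⊢
    by_contra hc
    push_neg at hc
    rw [if_pos hc] at hζ
    exact hζ rfl
  refine ⟨fun ζ => if g ζ < h ζ then g ζ else 0, ?_, ?_, ?_⟩
  · refine J.subset_mem ?_ hg
    intro ζ hζ
    simp only [Set.mem_setOf_eq] at hζ ⊢
    split at hζ
    · exact absurd (hζ.trans_lt ‹_›) (lt_irrefl _)
    · exact (nonpos_iff_eq_zero.1 hζ) ▸ zero_le
  · intro ζ
    by_cases h0 : h ζ = 0
    · have hng : ¬ g ζ < h ζ := by simp [h0, not_lt_zero]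
      exact Or.inr ⟨by simp [hng], h0⟩
    · by_cases hlt' : g ζ < h ζ
      · exact Or.inl (by simp [hlt'])
      · refine Or.inl ?_
        simp only [hlt', if_false]
        exact pos_iff_ne_zero.2 h0
  · have := J.rank_congr hdiff
    exact this ▸ (hlt : i ≤ J.rank g)

/-- One step of the construction. -/
noncomputable def next (h : ι → Ordinal) (i : Ordinal) : ι → Ordinal :=
  if hi : i < J.rank h then (J.exists_step hi).choose else h

theorem next_spec {h : ι → Ordinal} {i : Ordinal} (hi : i < J.rank h) :
    J.ltJ (J.next h i) h ∧
      (∀ ζ, J.next h i ζ < h ζ ∨ (J.next h i ζ = 0 ∧ h ζ = 0)) ∧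
      i ≤ J.rank (J.next h i) := by
  rw [next, dif_pos hi]
  exact (J.exists_step hi).choose_spec

/-- The family, built along reversed index lists. -/
noncomputable def build (J : SigmaIdeal ι) (f : ι → Ordinal.{u}) :
    List Ordinal.{u + 1} → (ι → Ordinal.{u})
  | [] => f
  | i :: rest => J.next (J.build f rest) i

theorem build_cons (f : ι → Ordinal.{u}) (i : Ordinal.{u + 1})
    (rest : List Ordinal.{u + 1}) :
    J.build f (i :: rest) = J.next (J.build f rest) i := rfl

theorem rank_build_gt (f : ι → Ordinal.{u}) :
    ∀ (rest : List Ordinal.{u + 1}) (i : Ordinal.{u + 1}),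
      (i :: rest).Chain' (· < ·) → (∀ j ∈ i :: rest, j < J.rank f) →
      i < J.rank (J.build f rest) := by
  intro rest
  induction rest with
  | nil => intro i _ hb; exact hb i (by simp)
  | cons j rest' ih =>
    intro i hc hb
    have hij : i < j := (List.isChain_cons_cons.1 hc).1
    have hj : j < J.rank (J.build f rest') :=
      ih j (List.isChain_cons_cons.1 hc).2 (fun k hk => hb k (by simp at hk ⊢; tauto))
    have hle := (J.next_spec hj).2.2
    rw [build_cons]
    exact hij.trans_le hle

end SigmaIdeal

/-- `η` is a strictly decreasing finite sequence of ordinals below `γ`. -/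
def IsDecSeq (γ : Ordinal) (η : List Ordinal) : Prop :=
  η.Chain' (· > ·) ∧ ∀ i ∈ η, i < γ

/-- for `J` an `ℵ₁`-complete ideal on `κ` and `f : κ → Ord` with
`∥f∥_J = γ*`, there is a family `(f_η)` indexed by strictly decreasing finite
sequences of ordinals `< γ*` such that `f_⟨⟩ = f` and, whenever `η⌢⟨i⟩` is such
a sequence, `f_{η⌢⟨i⟩} <_J f_η`, at every coordinate `ζ` either
`f_{η⌢⟨i⟩}(ζ) < f_η(ζ)` or `f_{η⌢⟨i⟩}(ζ) = f_η(ζ) = 0`, and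
`∥f_{η⌢⟨i⟩}∥_J ≥ i`. -/
theorem exists_rank_witnessing_family {ι : Type} (J : SigmaIdeal ι)
    (f : ι → Ordinal) :
    ∃ F : List Ordinal.{1} → (ι → Ordinal),
      F [] = f ∧
      ∀ (η : List Ordinal.{1}) (i : Ordinal.{1}),
        IsDecSeq (J.rank f) (η ++ [i]) →
          J.ltJ (F (η ++ [i])) (F η) ∧
          (∀ ζ : ι, F (η ++ [i]) ζ < F η ζ ∨ (F (η ++ [i]) ζ = 0 ∧ F η ζ = 0)) ∧
          i ≤ J.rank (F (η ++ [i])) := by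
  refine ⟨fun η => J.build f η.reverse, rfl, ?_⟩
  intro η i hdec
  have hrev : (η ++ [i]).reverse = i :: η.reverse := by simp
  have hc : ((η ++ [i]).reverse).Chain' (· < ·) := by
    rw [List.Chain', List.isChain_reverse]
    exact hdec.1
  have hb : ∀ j ∈ (η ++ [i]).reverse, j < J.rank f := by
    intro j hj
    exact hdec.2 j (List.mem_reverse.1 hj)
  rw [hrev] at hc hb
  have hi : i < J.rank (J.build f η.reverse) :=
    J.rank_build_gt f η.reverse i hc hb
  have hspec := J.next_spec hi
  dsimp only
  rw [hrev, J.build_cons]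
  exact hspec
end
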